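/- Let (a_n) be a sequence of positive integers and q > 1. Then ‖a_n‖_q → 0 as n → ∞ if and only if for every positive integer k there exists ν(k) such that k | a_n for all n ≥ ν(k). -/
import Mathlib

/-- The q-norm of an integer n: sum of 1/q^k over positive integers k not dividing n. -/
noncomputable def qnorm (q : ℝ) (n : ℤ) : ℝ :=
  ∑' k : ℕ, if 1 ≤ k ∧ ¬ ((k : ℤ) ∣ n) then 1 / q ^ k else 0

lemma qnorm_term_le (q : ℝ) (hq : 1 < q) (n : ℤ) (k : ℕ) :
    (if 1 ≤ k ∧ ¬ ((k : ℤ) ∣ n) then 1 / q ^ k else 0) ≤ (1/q) ^ k := by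
  have hq0 : 0 < q := lt_trans one_pos hq
  split
  · rw [one_div, one_div, inv_pow]
  · positivity

lemma qnorm_summable (q : ℝ) (hq : 1 < q) (n : ℤ) :
    Summable (fun k : ℕ => if 1 ≤ k ∧ ¬ ((k : ℤ) ∣ n) then 1 / q ^ k else 0) := by
  have hq0 : 0 < q := lt_trans one_pos hq
  have hr : (1:ℝ)/q < 1 := by rw [div_lt_one hq0]; exact hq
  refine Summable.of_nonneg_of_le (fun k => ?_) (qnorm_term_le q hq n)
    (summable_geometric_of_lt_one (by positivity) hr)
  split <;> positivity

lemma qnorm_lower (q : ℝ) (hq : 1 < q) (n : ℤ) (k : ℕ) (hk : 1 ≤ k)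
    (hnd : ¬ ((k : ℤ) ∣ n)) : 1 / q ^ k ≤ qnorm q n := by
  have := Summable.le_tsum (qnorm_summable q hq n) k (fun i _ => by split <;> positivity)
  simpa [qnorm, hk, hnd] using this

theorem stmt_14 (q : ℝ) (hq : 1 < q) (a : ℕ → ℕ) (ha : ∀ n, 0 < a n) :
    Filter.Tendsto (fun n => qnorm q ((a n : ℤ))) Filter.atTop (nhds 0)
      ↔ (∀ k : ℕ, 1 ≤ k → ∃ ν, ∀ n ≥ ν, k ∣ a n) := by
  have hq0 : 0 < q := lt_trans one_pos hq
  have hr : (1:ℝ)/q < 1 := by rw [div_lt_one hq0]; exact hq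
  have hgeo : Summable (fun k : ℕ => (1/q) ^ k) :=
    summable_geometric_of_lt_one (by positivity) hr
  constructor
  · intro h k hk
    have hpos : 0 < 1 / q ^ k := by positivity
    have := (h.eventually (eventually_lt_nhds hpos)).exists_forall_of_atTop
    obtain ⟨ν, hν⟩ := this
    refine ⟨ν, fun n hn => ?_⟩
    by_contra hnd
    have hnd' : ¬ ((k : ℤ) ∣ (a n : ℤ)) := by exact_mod_cast fun h' => hnd (Int.ofNat_dvd.mp h')
    exact absurd (qnorm_lower q hq _ k hk hnd') (not_le.mpr (hν n hn))
  · intro h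
    choose ν hν using fun k => h (k+1) (Nat.le_add_left 1 k)
    rw [Metric.tendsto_atTop]
    intro ε hε
    -- tail sums tend to 0
    have htail : Filter.Tendsto (fun m => ∑' j : ℕ, (1/q) ^ (j + m)) Filter.atTop (nhds 0) :=
      tendsto_sum_nat_add _
    obtain ⟨M, hM⟩ := (htail.eventually (eventually_lt_nhds hε)).exists_forall_of_atTop
    set K := M
    set N := (Finset.range (K+1)).sup ν with hN
    refine ⟨N, fun n hn => ?_⟩
    have hdvd : ∀ k, 1 ≤ k → k ≤ K + 1 → k ∣ a n := by
      intro k hk1 hkK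
      obtain ⟨j, rfl⟩ : ∃ j, k = j + 1 := ⟨k - 1, by omega⟩
      have hj : j ∈ Finset.range (K+1) := Finset.mem_range.mpr (by omega)
      exact hν j n (le_trans (Finset.le_sup hj) hn)
    have hqn_nonneg : 0 ≤ qnorm q ((a n : ℤ)) :=
      tsum_nonneg (fun k => by split <;> positivity)
    have hqn_le : qnorm q ((a n : ℤ)) ≤ ∑' j : ℕ, (1/q) ^ (j + (K+1)) := by
      unfold qnorm
      have hsum := qnorm_summable q hq ((a n : ℤ))
      rw [← Summable.sum_add_tsum_nat_add (K+1) hsum]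
      have h1 : ∑ i ∈ Finset.range (K+1),
          (if 1 ≤ i ∧ ¬ ((i : ℤ) ∣ (a n : ℤ)) then 1 / q ^ i else 0) = 0 := by
        apply Finset.sum_eq_zero
        intro i hi
        rcases Nat.eq_zero_or_pos i with h0 | h1
        · simp [h0]
        · have : (i : ℤ) ∣ (a n : ℤ) :=
            Int.ofNat_dvd.mpr (hdvd i h1 (by have := Finset.mem_range.mp hi; omega))
          simp [this]
      rw [h1, zero_add]
      exact Summable.tsum_le_tsum (fun j => qnorm_term_le q hq _ _)
        (hsum.comp_injective (add_left_injective (K+1)))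
        (hgeo.comp_injective (add_left_injective (K+1)))
    have hKtail : ∑' j : ℕ, (1/q) ^ (j + (K+1)) < ε := hM (K+1) (by omega)
    rw [Real.dist_eq, sub_zero, abs_of_nonneg hqn_nonneg]
    exact lt_of_le_of_lt hqn_le hKtail
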